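/- Let A ∈ ℤ^{m×n}. Every element g of the Graver basis of A satisfies ‖g‖₁ ≤ (2m‖A‖_∞ + 1)^m. -/

import Mathlib

/-- `x` is conformal to `y`: they lie in the same orthant and `|xᵢ| ≤ |yᵢ|`. -/
def ConformalTo {n : ℕ} (x y : Fin n → ℤ) : Prop :=
  ∀ i, 0 ≤ x i * y i ∧ |x i| ≤ |y i|

/-- `g` is an element of the Graver basis of `A`: a `⊑`-minimal nonzero element
of the integer kernel of `A`. -/
def InGraver {m n : ℕ} (A : Matrix (Fin m) (Fin n) ℤ) (g : Fin n → ℤ) : Prop :=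
  g ≠ 0 ∧ A.mulVec g = 0 ∧
    ∀ h : Fin n → ℤ, h ≠ 0 → A.mulVec h = 0 → ConformalTo h g → h = g

namespace GraverAux

open Finset

/-- Sum of a mapped list as a count-weighted finite sum. -/
lemma list_sum_eq_count_sum {α : Type*} [DecidableEq α] [Fintype α] (L : List α) (f : α → ℤ) :
    (L.map f).sum = ∑ j, (L.count j : ℤ) * f j := by
  induction L with
  | nil => simp
  | cons a l ih =>
    simp only [List.map_cons, List.sum_cons, ih, List.count_cons, beq_iff_eq]
    have h1 : ∀ j : α, ((l.count j + if a = j then 1 else 0 : ℕ) : ℤ) * f j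
        = (l.count j : ℤ) * f j + (if a = j then (1:ℤ) else 0) * f j := by
      intro j; push_cast; ring
    rw [Finset.sum_congr rfl fun j _ => h1 j, Finset.sum_add_distrib]
    have h2 : ∑ j, ((if a = j then (1:ℤ) else 0) * f j) = f a := by
      simp [ite_mul]
    rw [h2, add_comm]

lemma list_length_eq_count_sum {α : Type*} [DecidableEq α] [Fintype α] (L : List α) :
    (L.length : ℤ) = ∑ j, (L.count j : ℤ) := by
  have := list_sum_eq_count_sum L (fun _ => (1:ℤ))
  simpa using this

/-- Triangle inequality for a list of rationals, each bounded by `C`. -/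
lemma list_abs_sum_le {C : ℚ} (hC : 0 ≤ C) :
    ∀ (L : List ℚ), (∀ x ∈ L, |x| ≤ C) → |L.sum| ≤ L.length * C := by
  intro L
  induction L with
  | nil => simp
  | cons a l ih =>
    intro h
    have h1 : |a| ≤ C := h a (by simp)
    have h2 : |l.sum| ≤ l.length * C := ih fun x hx => h x (by simp [hx])
    calc |(a :: l).sum| = |a + l.sum| := by simp
      _ ≤ |a| + |l.sum| := abs_add_le _ _
      _ ≤ C + l.length * C := add_le_add h1 h2
      _ = (a :: l).length * C := by simp; ring

/-- A nontrivial direction in the kernel of the constraints, supported on `F`. -/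
lemma exists_kernel_dir {t m : ℕ} (v : Fin t → Fin m → ℚ) (F : Finset (Fin t))
    (hF : m + 1 < F.card) :
    ∃ d : Fin t → ℚ, d ≠ 0 ∧ (∀ i ∉ F, d i = 0) ∧ (∑ i ∈ F, d i = 0) ∧
      (∀ r, ∑ i ∈ F, d i * v i r = 0) := by
  let φ : (↥F → ℚ) →ₗ[ℚ] ((Fin m → ℚ) × ℚ) :=
    { toFun := fun d => (fun r => ∑ i : ↥F, d i * v i r, ∑ i : ↥F, d i)
      map_add' := by
        intro x y; ext r
        · simp [add_mul, Finset.sum_add_distrib]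
        · simp [Finset.sum_add_distrib]
      map_smul' := by
        intro c x; ext r
        · simp [Finset.mul_sum, mul_assoc]
        · simp [Finset.mul_sum] }
  have hnotinj : ¬ Function.Injective φ := by
    intro hinj
    have hle := LinearMap.finrank_le_finrank_of_injective hinj
    rw [Module.finrank_pi] at hle
    have : Module.finrank ℚ ((Fin m → ℚ) × ℚ) = m + 1 := by
      simp [Module.finrank_prod, Module.finrank_pi]
    rw [this, Fintype.card_coe] at hle
    omega
  rw [Function.not_injective_iff] at hnotinj
  obtain ⟨x, y, hxy, hne⟩ := hnotinj
  refine ⟨fun i => if h : i ∈ F then (x - y) ⟨i, h⟩ else 0, ?_, fun i hi => dif_neg hi, ?_, ?_⟩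
  · intro h0
    apply hne
    ext ⟨i, hi⟩
    have := congrFun h0 i
    simp only [dif_pos hi] at this
    have : x ⟨i, hi⟩ - y ⟨i, hi⟩ = 0 := this
    linarith [this]
  · have : ∑ i ∈ F, (fun i => if h : i ∈ F then (x - y) ⟨i, h⟩ else 0) i
        = ∑ i : ↥F, (x - y) i := by
      rw [← Finset.sum_coe_sort F]
      exact Finset.sum_congr rfl fun ⟨i, hi⟩ _ => dif_pos hi
    rw [this]
    have h2 := congrArg Prod.snd hxy
    simp only [φ, LinearMap.coe_mk, AddHom.coe_mk] at h2
    simp [Pi.sub_apply, Finset.sum_sub_distrib, sub_eq_zero]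
    exact h2
  · intro r
    have : ∑ i ∈ F, (fun i => if h : i ∈ F then (x - y) ⟨i, h⟩ else 0) i * v i r
        = ∑ i : ↥F, (x - y) i * v i r := by
      rw [← Finset.sum_coe_sort F]
      exact Finset.sum_congr rfl fun ⟨i, hi⟩ _ =>
        congrArg (· * v i r) (dif_pos hi)
    rw [this]
    have h1 := congrFun (congrArg Prod.fst hxy) r
    simp only [φ, LinearMap.coe_mk, AddHom.coe_mk] at h1
    simp only [Pi.sub_apply, sub_mul, Finset.sum_sub_distrib, sub_eq_zero]
    exact h1

variable {t m : ℕ}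

/-- Feasibility of coefficients `μ` on support `S` with budget `c`. -/
def Good (v : Fin t → Fin m → ℚ) (S : Finset (Fin t)) (c : ℚ) (μ : Fin t → ℚ) : Prop :=
  (∀ i ∈ S, 0 ≤ μ i ∧ μ i ≤ 1) ∧ (∑ i ∈ S, μ i = c) ∧ (∀ r, ∑ i ∈ S, μ i * v i r = 0)

/-- If `μ` is feasible with budget `#S - 1 - m` and has no zero coordinate on `S`,
then the fractional part of `S` is large. -/
lemma frac_big (v : Fin t → Fin m → ℚ) (S : Finset (Fin t)) (μ : Fin t → ℚ)
    (hG : Good v S ((S.card : ℚ) - 1 - m) μ) (hnz : ∀ i ∈ S, μ i ≠ 0) :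
    m + 1 < (S.filter (fun i => 0 < μ i ∧ μ i < 1)).card := by
  obtain ⟨hbox, hsum, -⟩ := hG
  set F := S.filter (fun i => 0 < μ i ∧ μ i < 1) with hF
  have hO : S.filter (fun i => ¬(0 < μ i ∧ μ i < 1)) = S.filter (fun i => μ i = 1) := by
    ext i
    simp only [Finset.mem_filter]
    constructor
    · rintro ⟨hi, hcond⟩
      refine ⟨hi, ?_⟩
      obtain ⟨h0, h1⟩ := hbox i hi
      have := hnz i hi
      by_contra hne1
      exact hcond ⟨lt_of_le_of_ne h0 (Ne.symm this), lt_of_le_of_ne h1 hne1⟩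
    · rintro ⟨hi, h1⟩
      exact ⟨hi, fun h => absurd h1 (ne_of_lt h.2)⟩
  have hsum_split : ∑ i ∈ F, μ i + ∑ i ∈ S.filter (fun i => ¬(0 < μ i ∧ μ i < 1)), μ i
      = ∑ i ∈ S, μ i := Finset.sum_filter_add_sum_filter_not S _ μ
  have hcard_split : F.card + (S.filter (fun i => ¬(0 < μ i ∧ μ i < 1))).card = S.card :=
    Finset.card_filter_add_card_filter_not _
  have hOsum : ∑ i ∈ S.filter (fun i => ¬(0 < μ i ∧ μ i < 1)), μ i
      = ((S.filter (fun i => ¬(0 < μ i ∧ μ i < 1))).card : ℚ) := by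
    rw [hO]
    rw [Finset.sum_congr rfl (fun i hi => (Finset.mem_filter.mp hi).2)]
    simp
  have key : ∑ i ∈ F, μ i = (F.card : ℚ) - 1 - m := by
    have hc : ((S.filter (fun i => ¬(0 < μ i ∧ μ i < 1))).card : ℚ)
        = (S.card : ℚ) - F.card := by
      have := hcard_split
      push_cast [← this]
      ring
    rw [hOsum, hc] at hsum_split
    rw [hsum] at hsum_split
    linarith
  by_contra hle
  push_neg at hle
  rcases Finset.eq_empty_or_nonempty F with hFe | hFne
  · rw [hFe] at key
    simp at key
    have : (0:ℚ) ≤ (m:ℚ) := by positivity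
    linarith
  · have hpos : 0 < ∑ i ∈ F, μ i :=
      Finset.sum_pos (fun i hi => (Finset.mem_filter.mp hi).2.1) hFne
    have : (m:ℚ) + 1 < (F.card : ℚ) := by linarith [key]
    have h2 : ((m+1 : ℕ) : ℚ) < (F.card : ℚ) := by push_cast; linarith
    have := Nat.cast_lt.mp h2
    omega

/-- Rounding: any feasible `μ` with budget `#S - 1 - m` can be moved to a feasible `μ'`
vanishing at some `j ∈ S`. -/
lemma rounding (v : Fin t → Fin m → ℚ) (S : Finset (Fin t)) :
    ∀ (N : ℕ) (μ : Fin t → ℚ),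
      (S.filter (fun i => 0 < μ i ∧ μ i < 1)).card ≤ N →
      Good v S ((S.card : ℚ) - 1 - m) μ →
      ∃ j ∈ S, ∃ μ', Good v S ((S.card : ℚ) - 1 - m) μ' ∧ μ' j = 0 := by
  intro N
  induction N with
  | zero =>
    intro μ hcard hG
    by_cases hz : ∃ j ∈ S, μ j = 0
    · obtain ⟨j, hj, hjz⟩ := hz
      exact ⟨j, hj, μ, hG, hjz⟩
    · push_neg at hz
      have := frac_big v S μ hG hz
      omega
  | succ N ih =>
    intro μ hcard hG
    by_cases hz : ∃ j ∈ S, μ j = 0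
    · obtain ⟨j, hj, hjz⟩ := hz
      exact ⟨j, hj, μ, hG, hjz⟩
    push_neg at hz
    have hFbig := frac_big v S μ hG hz
    set F := S.filter (fun i => 0 < μ i ∧ μ i < 1) with hFdef
    have hFS : F ⊆ S := Finset.filter_subset _ _
    obtain ⟨d, hd0, hdsupp, hdsum, hdv⟩ := exists_kernel_dir v F hFbig
    -- set of moving coordinates
    have hTne : (F.filter (fun i => d i ≠ 0)).Nonempty := by
      obtain ⟨i, hi⟩ := Function.ne_iff.mp hd0
      have hiF : i ∈ F := by
        by_contra hiF
        exact hi (hdsupp i hiF)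
      exact ⟨i, Finset.mem_filter.mpr ⟨hiF, hi⟩⟩
    set ρ : Fin t → ℚ := fun i => if 0 < d i then (1 - μ i) / d i else μ i / (-d i) with hρdef
    have hρpos : ∀ i ∈ F.filter (fun i => d i ≠ 0), 0 < ρ i := by
      intro i hi
      obtain ⟨hiF, hdi⟩ := Finset.mem_filter.mp hi
      obtain ⟨-, h0, h1⟩ := Finset.mem_filter.mp hiF
      rcases lt_or_gt_of_ne hdi with hneg | hpos
      · rw [hρdef]
        simp only [if_neg (not_lt.mpr (le_of_lt hneg))]
        exact div_pos h0 (by linarith)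
      · rw [hρdef]
        simp only [if_pos hpos]
        exact div_pos (by linarith) hpos
    obtain ⟨i₀, hi₀T, hi₀min⟩ := Finset.exists_min_image _ ρ hTne
    obtain ⟨hi₀F, hdi₀⟩ := Finset.mem_filter.mp hi₀T
    set τ := ρ i₀ with hτdef
    have hτpos : 0 < τ := hρpos i₀ hi₀T
    set μ' : Fin t → ℚ := fun i => μ i + τ * d i with hμ'def
    -- feasibility of μ'
    have hGood' : Good v S ((S.card : ℚ) - 1 - m) μ' := by
      obtain ⟨hbox, hsum, hv0⟩ := hG
      refine ⟨?_, ?_, ?_⟩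
      · intro i hiS
        rcases eq_or_ne (d i) 0 with hdi | hdi
        · simp [hμ'def, hdi]
          exact hbox i hiS
        · have hiF : i ∈ F := by
            by_contra hiF
            exact hdi (hdsupp i hiF)
          have hiT : i ∈ F.filter (fun i => d i ≠ 0) := Finset.mem_filter.mpr ⟨hiF, hdi⟩
          have hτle : τ ≤ ρ i := hi₀min i hiT
          obtain ⟨-, h0, h1⟩ := Finset.mem_filter.mp hiF
          rcases lt_or_gt_of_ne hdi with hneg | hpos
          · have hρi : ρ i = μ i / (-d i) := by
              rw [hρdef]; simp [if_neg (not_lt.mpr (le_of_lt hneg))]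
            rw [hρi] at hτle
            have h2 : τ * (-d i) ≤ μ i := by
              rw [div_eq_mul_inv] at hτle
              have hpos' : (0:ℚ) < -d i := by linarith
              calc τ * (-d i) ≤ (μ i * (-d i)⁻¹) * (-d i) :=
                    mul_le_mul_of_nonneg_right hτle (le_of_lt hpos')
                _ = μ i := by field_simp
            constructor
            · simp only [hμ'def]; nlinarith
            · simp only [hμ'def]; nlinarith
          · have hρi : ρ i = (1 - μ i) / d i := by
              rw [hρdef]; simp [if_pos hpos]
            rw [hρi] at hτle
            have h2 : τ * d i ≤ 1 - μ i := by
              rw [div_eq_mul_inv] at hτle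
              calc τ * d i ≤ ((1 - μ i) * (d i)⁻¹) * d i :=
                    mul_le_mul_of_nonneg_right hτle (le_of_lt hpos)
                _ = 1 - μ i := by field_simp
            constructor
            · simp only [hμ'def]; nlinarith
            · simp only [hμ'def]; nlinarith
      · have hdS : ∑ i ∈ S, d i = 0 := by
          rw [← Finset.sum_subset hFS (fun i _ hiF => hdsupp i hiF)]
          exact hdsum
        simp only [hμ'def]
        rw [Finset.sum_add_distrib, hsum, ← Finset.mul_sum, hdS]
        ring
      · intro r
        have hdvS : ∑ i ∈ S, d i * v i r = 0 := by
          rw [← Finset.sum_subset hFS (fun i _ hiF => by rw [hdsupp i hiF, zero_mul])]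
          exact hdv r
        simp only [hμ'def]
        have : ∀ i, (μ i + τ * d i) * v i r = μ i * v i r + τ * (d i * v i r) := by
          intro i; ring
        rw [Finset.sum_congr rfl (fun i _ => this i), Finset.sum_add_distrib, hv0 r,
          ← Finset.mul_sum, hdvS]
        ring
    -- the value at i₀ becomes 0 or 1
    obtain ⟨-, h0i₀, h1i₀⟩ := Finset.mem_filter.mp hi₀F
    rcases lt_or_gt_of_ne hdi₀ with hneg | hpos
    · -- μ' i₀ = 0 : done
      have hzero : μ' i₀ = 0 := by
        simp only [hμ'def, hτdef, hρdef, if_neg (not_lt.mpr (le_of_lt hneg))]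
        have h2 : -d i₀ ≠ 0 := neg_ne_zero.mpr hdi₀
        field_simp
        ring
      exact ⟨i₀, hFS hi₀F, μ', hGood', hzero⟩
    · -- μ' i₀ = 1 : recurse
      have hone : μ' i₀ = 1 := by
        simp only [hμ'def, hτdef, hρdef, if_pos hpos]
        rw [div_mul_cancel₀ _ hdi₀]
        ring
      have hF'sub : S.filter (fun i => 0 < μ' i ∧ μ' i < 1) ⊆ F.erase i₀ := by
        intro i hi
        obtain ⟨hiS, h0, h1⟩ := Finset.mem_filter.mp hi
        have hiF : i ∈ F := by
          rcases eq_or_ne (d i) 0 with hdi | hdi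
          · refine Finset.mem_filter.mpr ⟨hiS, ?_⟩
            have : μ' i = μ i := by simp [hμ'def, hdi]
            rw [this] at h0 h1
            exact ⟨h0, h1⟩
          · by_contra hiF
            exact hdi (hdsupp i hiF)
        refine Finset.mem_erase.mpr ⟨?_, hiF⟩
        intro hii₀
        rw [hii₀, hone] at h1
        exact absurd h1 (lt_irrefl 1)
      have hcard' : (S.filter (fun i => 0 < μ' i ∧ μ' i < 1)).card ≤ N := by
        have h1 : (S.filter (fun i => 0 < μ' i ∧ μ' i < 1)).card ≤ (F.erase i₀).card :=
          Finset.card_le_card hF'sub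
        have h2 : (F.erase i₀).card = F.card - 1 := Finset.card_erase_of_mem hi₀F
        omega
      exact ih μ' hcard' hGood'

/-- One step: shrink the support `S` by one element, keeping feasibility. -/
lemma key_step (v : Fin t → Fin m → ℚ) (S : Finset (Fin t)) (lam : Fin t → ℚ)
    (hS : m + 1 ≤ S.card) (hG : Good v S ((S.card : ℚ) - m) lam) :
    ∃ j ∈ S, ∃ μ, Good v (S.erase j) (((S.erase j).card : ℚ) - m) μ := by
  have hk1 : (1:ℚ) ≤ (S.card : ℚ) - m := by
    have h := (Nat.cast_le (α := ℚ)).mpr hS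
    push_cast at h
    linarith
  set k : ℚ := (S.card : ℚ) with hk
  have hkm : (0:ℚ) < k - m := by linarith
  set f : ℚ := (k - 1 - m) / (k - m) with hf
  have hf0 : 0 ≤ f := div_nonneg (by linarith) (le_of_lt hkm)
  have hf1 : f ≤ 1 := (div_le_one hkm).mpr (by linarith)
  obtain ⟨hbox, hsum, hv0⟩ := hG
  have hGμ : Good v S (k - 1 - m) (fun i => lam i * f) := by
    refine ⟨?_, ?_, ?_⟩
    · intro i hi
      obtain ⟨h0, h1⟩ := hbox i hi
      constructor
      · positivity
      · calc lam i * f ≤ 1 * 1 := mul_le_mul h1 hf1 hf0 zero_le_one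
          _ = 1 := by ring
    · rw [← Finset.sum_mul, hsum, hf]
      field_simp
    · intro r
      have : ∀ i, lam i * f * v i r = f * (lam i * v i r) := fun i => by ring
      rw [Finset.sum_congr rfl fun i _ => this i, ← Finset.mul_sum, hv0 r, mul_zero]
  obtain ⟨j, hjS, μ', hG', hz'⟩ := rounding v S _ (fun i => lam i * f) le_rfl hGμ
  refine ⟨j, hjS, μ', ?_⟩
  obtain ⟨hbox', hsum', hv0'⟩ := hG'
  have hcarde : ((S.erase j).card : ℚ) = k - 1 := by
    rw [Finset.card_erase_of_mem hjS]
    have h1 : 1 ≤ S.card := le_trans (by omega) hS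
    push_cast [Nat.cast_sub h1]
    ring
  refine ⟨fun i hi => hbox' i (Finset.mem_of_mem_erase hi), ?_, ?_⟩
  · rw [Finset.sum_erase _ hz', hsum', hcarde]
  · intro r
    rw [Finset.sum_erase _ (by rw [hz', zero_mul]), hv0' r]

/-- Chain construction: an ordering of `S` with all prefix sums bounded by `m * C`. -/
lemma chain (v : Fin t → Fin m → ℚ) (C : ℚ) (hC : 0 ≤ C) (hv : ∀ i r, |v i r| ≤ C) :
    ∀ (k : ℕ) (S : Finset (Fin t)), S.card = k →
      (m < k → ∃ lam, Good v S ((k : ℚ) - m) lam) →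
      ∃ l : List (Fin t), l.Nodup ∧ l.toFinset = S ∧
        ∀ (p : ℕ) (r : Fin m), |((l.take p).map (fun i => v i r)).sum| ≤ m * C := by
  intro k
  induction k with
  | zero =>
    intro S hcard _
    refine ⟨[], List.nodup_nil, by simpa using (Finset.card_eq_zero.mp hcard).symm, ?_⟩
    intro p r
    simp only [List.take_nil, List.map_nil, List.sum_nil, abs_zero]
    positivity
  | succ k ih =>
    intro S hcard hlam
    by_cases hm : m < k + 1
    · obtain ⟨lam, hGlam⟩ := hlam hm
      have hGlam' : Good v S ((S.card : ℚ) - m) lam := by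
        rw [hcard]; exact hGlam
      have hS : m + 1 ≤ S.card := by omega
      obtain ⟨j, hjS, μ, hGμ⟩ := key_step v S lam hS hGlam'
      have hcard' : (S.erase j).card = k := by
        rw [Finset.card_erase_of_mem hjS, hcard]
        omega
      obtain ⟨l', hnd, htf, hbound⟩ := ih (S.erase j) hcard'
        (fun _ => ⟨μ, by rw [← hcard']; exact hGμ⟩)
      have hjl' : j ∉ l' := by
        intro hj
        have : j ∈ S.erase j := htf ▸ List.mem_toFinset.mpr hj
        exact (Finset.notMem_erase j S) this
      have hlen : l'.length = k := by
        rw [← hcard', ← htf]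
        exact (List.toFinset_card_of_nodup hnd).symm
      refine ⟨l' ++ [j], ?_, ?_, ?_⟩
      · rw [List.nodup_append]
        exact ⟨hnd, List.nodup_singleton j, by simp; intro a ha h; subst h; exact hjl' ha⟩
      · rw [List.toFinset_append, htf]
        have hj1 : (List.toFinset [j]) = {j} := by simp
        rw [hj1, Finset.union_comm, ← Finset.insert_eq, Finset.insert_erase hjS]
      · intro p r
        rcases le_or_gt p k with hp | hp
        · rw [List.take_append_of_le_length (by omega)]
          exact hbound p r
        · have hlenfull : (l' ++ [j]).length = k + 1 := by simp [hlen]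
          rw [List.take_of_length_le (by omega)]
          have hndfull : (l' ++ [j]).Nodup := by
            rw [List.nodup_append]
            exact ⟨hnd, List.nodup_singleton j, by simp; intro a ha h; subst h; exact hjl' ha⟩
          have htffull : (l' ++ [j]).toFinset = S := by
            rw [List.toFinset_append, htf]
            have hj1 : (List.toFinset [j]) = {j} := by simp
            rw [hj1, Finset.union_comm, ← Finset.insert_eq, Finset.insert_erase hjS]
          have hsumS : (((l' ++ [j]).map (fun i => v i r)).sum) = ∑ i ∈ S, v i r := by
            rw [← htffull, List.sum_toFinset _ hndfull]
          rw [hsumS]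
          obtain ⟨hbox, hsum, hv0⟩ := hGlam'
          have step1 : ∑ i ∈ S, v i r = ∑ i ∈ S, (1 - lam i) * v i r := by
            have : ∀ i, (1 - lam i) * v i r = v i r - lam i * v i r := fun i => by ring
            rw [Finset.sum_congr rfl fun i _ => this i, Finset.sum_sub_distrib, hv0 r,
              sub_zero]
          rw [step1]
          calc |∑ i ∈ S, (1 - lam i) * v i r| ≤ ∑ i ∈ S, |(1 - lam i) * v i r| :=
                Finset.abs_sum_le_sum_abs _ _
            _ ≤ ∑ i ∈ S, (1 - lam i) * C := by
                apply Finset.sum_le_sum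
                intro i hi
                obtain ⟨h0, h1⟩ := hbox i hi
                rw [abs_mul, abs_of_nonneg (by linarith : (0:ℚ) ≤ 1 - lam i)]
                exact mul_le_mul_of_nonneg_left (hv i r) (by linarith)
            _ = (m : ℚ) * C := by
                rw [← Finset.sum_mul]
                congr 1
                rw [Finset.sum_sub_distrib, hsum, Finset.sum_const, nsmul_eq_mul, mul_one]
                ring
    · -- trivial case: at most m elements
      refine ⟨S.toList, S.nodup_toList, Finset.toList_toFinset S, ?_⟩
      intro p r
      have hmem : ∀ x ∈ (S.toList.take p).map (fun i => v i r), |x| ≤ C := by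
        intro x hx
        obtain ⟨i, -, rfl⟩ := List.mem_map.mp hx
        exact hv i r
      have hlen : ((S.toList.take p).map (fun i => v i r)).length ≤ m := by
        rw [List.length_map]
        have h1 : (S.toList.take p).length ≤ S.toList.length := by
          simpa using List.length_take_le p S.toList
        rw [Finset.length_toList, hcard] at h1
        omega
      calc |((S.toList.take p).map (fun i => v i r)).sum|
          ≤ (((S.toList.take p).map (fun i => v i r)).length : ℚ) * C :=
            list_abs_sum_le hC _ hmem
        _ ≤ (m : ℚ) * C := by
            apply mul_le_mul_of_nonneg_right _ hC
            exact_mod_cast hlen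

lemma list_cast_sum {α : Type*} (l : List α) (g : α → ℤ) :
    (((l.map g).sum : ℤ) : ℚ) = (l.map fun a => ((g a : ℤ) : ℚ)).sum := by
  induction l with
  | nil => simp
  | cons a l ih => simp [ih]

/-- Steinitz-type reordering for integer vector lists with zero sum. -/
lemma steinitz_list {α : Type*} [DecidableEq α] (C : ℤ) (hC : 0 ≤ C)
    (f : α → Fin m → ℤ) (L : List α)
    (hf : ∀ a ∈ L, ∀ r, |f a r| ≤ C)
    (hsum : ∀ r, ((L.map fun a => f a r).sum) = 0) :
    ∃ L' : List α, L'.Perm L ∧ ∀ (p : ℕ) (r : Fin m),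
      |(((L'.take p).map fun a => f a r).sum)| ≤ (m : ℤ) * C := by
  set t := L.length with ht
  set v : Fin t → Fin m → ℚ := fun i r => ((f (L.get i) r : ℤ) : ℚ) with hvdef
  have hvb : ∀ i r, |v i r| ≤ (C : ℚ) := by
    intro i r
    have h := hf (L.get i) (L.get_mem i) r
    show |((f (L.get i) r : ℤ) : ℚ)| ≤ (C : ℚ)
    exact_mod_cast h
  have hsum' : ∀ r, ∑ i : Fin t, v i r = 0 := by
    intro r
    have h1 : (L.map fun a => f a r) = (List.finRange t).map (fun i => f (L.get i) r) := by
      conv_lhs => rw [← List.map_get_finRange L]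
      rw [List.map_map]
      rfl
    have h2 : ∑ i : Fin t, v i r
        = ((List.finRange t).map (fun i => v i r)).sum := Fin.sum_univ_def _
    rw [h2, hvdef]
    have h3 := list_cast_sum (List.finRange t) (fun i => f (L.get i) r)
    rw [← h3, ← h1, hsum r]
    simp
  have hlam : m < t → ∃ lam, Good v Finset.univ ((t : ℚ) - m) lam := by
    intro hmt
    have ht0 : (0:ℚ) < (t:ℚ) := by
      have : 0 < t := by omega
      exact_mod_cast this
    have htm : (m:ℚ) < (t:ℚ) := by exact_mod_cast hmt
    refine ⟨fun _ => ((t:ℚ) - m) / t, ?_, ?_, ?_⟩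
    · intro i _
      constructor
      · apply div_nonneg (by linarith) (le_of_lt ht0)
      · rw [div_le_one ht0]; linarith
    · rw [Finset.sum_const, Finset.card_univ, Fintype.card_fin, nsmul_eq_mul]
      field_simp
    · intro r
      rw [← Finset.mul_sum, hsum' r, mul_zero]
  obtain ⟨l, hnd, htf, hbound⟩ := chain v (C : ℚ) (by exact_mod_cast hC) hvb t Finset.univ
    (by simp) hlam
  have hperm0 : l.Perm (List.finRange t) :=
    List.perm_of_nodup_nodup_toFinset_eq hnd (List.nodup_finRange t)
      (htf.trans (List.toFinset_finRange t).symm)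
  refine ⟨l.map L.get, ?_, ?_⟩
  · have := hperm0.map L.get
    rwa [List.map_get_finRange L] at this
  · intro p r
    have heq : (((l.map L.get).take p).map fun a => f a r)
        = (l.take p).map (fun i => f (L.get i) r) := by
      rw [← List.map_take, List.map_map]
      rfl
    have hcast : ((((l.take p).map (fun i => f (L.get i) r)).sum : ℤ) : ℚ)
        = ((l.take p).map (fun i => v i r)).sum := by
      rw [list_cast_sum]
    have hb := hbound p r
    rw [← hcast] at hb
    rw [heq]
    have habs : |((((l.take p).map (fun i => f (L.get i) r)).sum : ℤ) : ℚ)|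
        = ((|((l.take p).map (fun i => f (L.get i) r)).sum| : ℤ) : ℚ) := by
      rw [Int.cast_abs]
    rw [habs] at hb
    have hmc : ((m : ℚ) * (C : ℚ)) = (((m : ℤ) * C : ℤ) : ℚ) := by push_cast; ring
    rw [hmc] at hb
    exact_mod_cast hb

end GraverAux

/-- Base bound: every Graver basis element `g` of `A` satisfies
`‖g‖₁ ≤ (2m‖A‖_∞ + 1)^m`. -/
theorem graver_one_norm_bound (m n : ℕ) (A : Matrix (Fin m) (Fin n) ℤ) (C : ℤ)
    (hC : ∀ i j, |A i j| ≤ C) (g : Fin n → ℤ) (hg : InGraver A g) :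
    (∑ i, |g i|) ≤ (2 * (m : ℤ) * C + 1) ^ m := by
  obtain ⟨hg0, hgker, hmin⟩ := hg
  rcases Nat.eq_zero_or_pos n with hn | hn
  · subst hn
    exact absurd (funext fun i => i.elim0) hg0
  rcases Nat.eq_zero_or_pos m with hm | hm
  · subst hm
    have hi : ∃ i, g i ≠ 0 := by
      by_contra hno; push_neg at hno; exact hg0 (funext hno)
    obtain ⟨i₀, hi₀⟩ := hi
    set h : Fin n → ℤ := fun j => if j = i₀ then (if 0 ≤ g i₀ then 1 else -1) else 0 with hh
    have hne : h ≠ 0 := by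
      intro h0
      have h1 := congrFun h0 i₀
      simp only [hh, if_pos rfl, Pi.zero_apply] at h1
      split_ifs at h1 <;> omega
    have hker : A.mulVec h = 0 := funext fun r => r.elim0
    have hconf : ConformalTo h g := by
      intro j
      by_cases hj : j = i₀
      · subst hj
        simp only [hh, if_pos rfl]
        split_ifs with hs
        · refine ⟨by simpa using hs, ?_⟩
          simpa using Int.one_le_abs hi₀
        · push_neg at hs
          refine ⟨by simp; omega, ?_⟩
          simpa using Int.one_le_abs hi₀
      · simp [hh, hj]
    have hhg := hmin h hne hker hconf
    rw [pow_zero, ← hhg, hh]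
    have : ∑ j, |if j = i₀ then (if 0 ≤ g i₀ then (1:ℤ) else -1) else 0| = 1 := by
      rw [Finset.sum_congr rfl (fun j _ => by
        show |if j = i₀ then (if 0 ≤ g i₀ then (1:ℤ) else -1) else 0|
          = if j = i₀ then 1 else 0
        split_ifs <;> simp)]
      simp
    exact le_of_eq this
  -- main case : m ≥ 1 and n ≥ 1
  have hC0 : 0 ≤ C := le_trans (abs_nonneg _) (hC ⟨0, hm⟩ ⟨0, hn⟩)
  by_contra hbig
  push_neg at hbig
  set s : Fin n → ℤ := fun j => if 0 ≤ g j then 1 else -1 with hs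
  have hsg : ∀ j, s j * g j = |g j| := by
    intro j
    by_cases hj : 0 ≤ g j
    · have h1 : s j = 1 := by rw [hs]; simp [hj]
      rw [h1, one_mul, abs_of_nonneg hj]
    · push_neg at hj
      have h1 : s j = -1 := by rw [hs]; simp [not_le.mpr hj]
      rw [h1, abs_of_neg hj]; ring
  have hsabs : ∀ j, |s j| = 1 := by
    intro j
    by_cases hj : 0 ≤ g j
    · have h1 : s j = 1 := by rw [hs]; simp [hj]
      rw [h1]; simp
    · have h1 : s j = -1 := by rw [hs]; simp [hj]
      rw [h1]; simp
  have hnatg : ∀ j, ((g j).natAbs : ℤ) * s j = g j := by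
    intro j
    have habs : ((g j).natAbs : ℤ) = |g j| := (Int.abs_eq_natAbs _).symm
    by_cases hj : 0 ≤ g j
    · have h1 : s j = 1 := by rw [hs]; simp [hj]
      rw [habs, h1, abs_of_nonneg hj]; ring
    · push_neg at hj
      have h1 : s j = -1 := by rw [hs]; simp [not_le.mpr hj]
      rw [habs, h1, abs_of_neg hj]; ring
  set w : Fin n → Fin m → ℤ := fun j r => s j * A r j with hw
  have hwdef : ∀ j r, w j r = s j * A r j := fun j r => by rw [hw]
  set L : List (Fin n) := (List.finRange n).flatMap (fun j => List.replicate (g j).natAbs j)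
    with hLdef
  have hcount : ∀ j, L.count j = (g j).natAbs := by
    intro j
    rw [hLdef, List.count_flatMap]
    have hrep : (List.map (List.count j ∘ fun j => List.replicate (g j).natAbs j)
          (List.finRange n))
        = List.map (fun a => if a = j then (g a).natAbs else 0) (List.finRange n) := by
      apply List.map_congr_left
      intro a _
      simp only [Function.comp_apply, List.count_replicate]
      by_cases hjj : a = j
      · subst hjj; simp
      · simp [hjj, Ne.symm hjj]
    rw [hrep, ← Fin.sum_univ_def]
    simp
  have hlen : (L.length : ℤ) = ∑ j, |g j| := by
    rw [GraverAux.list_length_eq_count_sum L]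
    refine Finset.sum_congr rfl fun j _ => ?_
    rw [hcount j]
    exact (Int.abs_eq_natAbs _).symm
  have hfb : ∀ a ∈ L, ∀ r, |w a r| ≤ C := by
    intro a _ r
    rw [hwdef, abs_mul, hsabs, one_mul]
    exact hC r a
  have hsum0 : ∀ r, ((L.map fun a => w a r).sum) = 0 := by
    intro r
    rw [GraverAux.list_sum_eq_count_sum]
    have hterm : ∀ j, (L.count j : ℤ) * w j r = A r j * g j := by
      intro j
      rw [hcount j, hwdef,
        show ((g j).natAbs : ℤ) * (s j * A r j) = (((g j).natAbs : ℤ) * s j) * A r j by ring,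
        hnatg j]
      ring
    rw [Finset.sum_congr rfl fun j _ => hterm j]
    have h0 := congrFun hgker r
    simpa [Matrix.mulVec, dotProduct] using h0
  obtain ⟨L', hperm, hpref⟩ := GraverAux.steinitz_list C hC0 w L hfb hsum0
  set t := L.length with htdef
  have hlen' : L'.length = t := hperm.length_eq
  have hbase : (0:ℤ) ≤ 2 * (m:ℤ) * C + 1 := by positivity
  set B : Finset (Fin m → ℤ) := Finset.Icc (fun _ => -((m:ℤ) * C)) (fun _ => (m:ℤ) * C)
    with hB
  have hcardB : (B.card : ℤ) = (2 * (m:ℤ) * C + 1) ^ m := by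
    rw [hB, Pi.card_Icc]
    have hIcc : ∀ r : Fin m, (Finset.Icc (-((m:ℤ) * C)) ((m:ℤ) * C)).card
        = (2 * (m:ℤ) * C + 1).toNat := by
      intro r
      rw [Int.card_Icc]
      congr 1
      ring
    rw [Finset.prod_congr rfl fun r _ => hIcc r, Finset.prod_const, Finset.card_univ,
      Fintype.card_fin]
    push_cast [Int.toNat_of_nonneg hbase]
    ring
  have hmaps : ∀ k ∈ Finset.range t,
      (fun k => fun r => ((L'.take k).map fun a => w a r).sum) k ∈ B := by
    intro k _
    rw [hB, Finset.mem_Icc]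
    refine ⟨Pi.le_def.mpr fun r => ?_, Pi.le_def.mpr fun r => ?_⟩
    · exact (abs_le.mp (hpref k r)).1
    · exact (abs_le.mp (hpref k r)).2
  have hlt : B.card < (Finset.range t).card := by
    rw [Finset.card_range]
    have h1 : (B.card : ℤ) < (t : ℤ) := by
      rw [hcardB, hlen]
      exact hbig
    exact_mod_cast h1
  obtain ⟨a, ha, b, hb, hab, hPab⟩ := Finset.exists_ne_map_eq_of_card_lt_of_maps_to hlt hmaps
  have key : ∀ a b : ℕ, b ∈ Finset.range t → a < b →
      ((fun r => ((L'.take a).map fun x => w x r).sum)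
        = fun r => ((L'.take b).map fun x => w x r).sum) → False := by
    intro a b hb haltb hP
    have hbt : b < t := Finset.mem_range.mp hb
    set W : List (Fin n) := (L'.drop a).take (b - a) with hWdef
    have hWlen : W.length = b - a := by
      rw [hWdef, List.length_take, List.length_drop, hlen']
      omega
    have htake : L'.take b = L'.take a ++ W := by
      have hab' : a + (b - a) = b := by omega
      have h2 := List.take_add (l := L') (i := a) (j := b - a)
      rw [hab'] at h2
      rw [h2, hWdef]
    have hWsum : ∀ r, ((W.map fun x => w x r).sum) = 0 := by
      intro r
      have h1 := congrFun hP r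
      rw [htake, List.map_append, List.sum_append] at h1
      linarith
    set h : Fin n → ℤ := fun j => (W.count j : ℤ) * s j with hh
    have hhdef : ∀ j, h j = (W.count j : ℤ) * s j := fun j => by rw [hh]
    have hWsub : List.Sublist W L' := (List.take_sublist _ _).trans (List.drop_sublist _ _)
    have hcountW : ∀ j, W.count j ≤ (g j).natAbs := by
      intro j
      calc W.count j ≤ L'.count j := hWsub.count_le j
        _ = L.count j := hperm.count_eq j
        _ = (g j).natAbs := hcount j
    have habsh : ∀ j, |h j| = (W.count j : ℤ) := by
      intro j
      rw [hhdef, abs_mul, hsabs, mul_one, abs_of_nonneg (by positivity)]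
    have hker : A.mulVec h = 0 := by
      funext r
      have h1 := hWsum r
      rw [GraverAux.list_sum_eq_count_sum] at h1
      show (A.mulVec h) r = 0
      rw [Matrix.mulVec, dotProduct]
      have h2 : ∑ j, A r j * h j = ∑ j, (W.count j : ℤ) * w j r :=
        Finset.sum_congr rfl fun j _ => by rw [hhdef, hwdef]; ring
      rw [h2]
      exact h1
    have hconf : ConformalTo h g := by
      intro j
      constructor
      · rw [hhdef, mul_assoc, hsg j]
        positivity
      · rw [habsh j]
        have h2 : ((g j).natAbs : ℤ) = |g j| := (Int.abs_eq_natAbs _).symm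
        rw [← h2]
        exact_mod_cast hcountW j
    have hsumh : ∑ j, |h j| = ((b - a : ℕ) : ℤ) := by
      rw [Finset.sum_congr rfl fun j _ => habsh j, ← GraverAux.list_length_eq_count_sum W,
        hWlen]
    have hne : h ≠ 0 := by
      intro h0
      rw [h0] at hsumh
      simp only [Pi.zero_apply, abs_zero, Finset.sum_const_zero] at hsumh
      have hba : b - a ≠ 0 := by omega
      exact hba (by exact_mod_cast hsumh.symm)
    have heq := hmin h hne hker hconf
    rw [heq] at hsumh
    rw [hsumh] at hlen
    have hba2 : b - a < t := by omega
    have h3 : (t:ℤ) < (t:ℤ) := by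
      calc (t:ℤ) = ((b - a : ℕ):ℤ) := hlen
        _ < (t:ℤ) := by exact_mod_cast hba2
    exact absurd h3 (lt_irrefl _)
  rcases lt_or_gt_of_ne hab with h1 | h1
  · exact key a b hb h1 hPab
  · exact key b a ha h1 hPab.symm
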